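/- For g = the permutation-type matrix with rows (1,0,0,0),(0,1,0,0),(0,0,0,1),(0,0,-1,0) in U(4), the conjugated subalgebra Ad_g(su(2)^d) satisfies δ(Ad_g(su(2)^d)) ⊂ Ad_g(su(2)^d) ∧ u(4), i.e. gSU(2)^d g⁻¹ is a coisotropic subgroup. -/

import Mathlib

open ExteriorAlgebra

noncomputable section

abbrev M4 := Matrix (Fin 4) (Fin 4) ℂ

noncomputable def elm (i j : Fin 4) : M4 := Matrix.single i j (1 : ℂ)

noncomputable def Hgen : Fin 3 → M4 := fun i =>
  Complex.I • (elm i.castSucc i.castSucc - elm i.succ i.succ)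
noncomputable def Egen : Fin 3 → M4 := fun i =>
  (2 * Complex.I)⁻¹ • (elm i.castSucc i.succ + elm i.succ i.castSucc)
noncomputable def Fgen : Fin 3 → M4 := fun i =>
  (2⁻¹ : ℂ) • (elm i.castSucc i.succ - elm i.succ i.castSucc)
noncomputable def Hc : M4 := Complex.I • (1 : M4)

noncomputable def wedge (x y : M4) : ExteriorAlgebra ℝ M4 :=
  ExteriorAlgebra.ι ℝ x * ExteriorAlgebra.ι ℝ y

/-- the conjugating matrix `g`, with rows (1,0,0,0),(0,1,0,0),(0,0,0,1),(0,0,-1,0) -/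
noncomputable def gmat : M4 := !![1,0,0,0; 0,1,0,0; 0,0,0,1; 0,0,-1,0]

/-- `Ad_g(X) = g X g⁻¹` -/
noncomputable def Adg (x : M4) : M4 := gmat * x * gmat⁻¹

/-- the conjugated diagonal su(2): `Ad_g(su(2)^d)` -/
noncomputable def su2dg : Submodule ℝ M4 :=
  Submodule.span ℝ {Adg (Hgen 0 + Hgen 2), Adg (Egen 0 + Egen 2), Adg (Fgen 0 + Fgen 2)}

/-- `Ad_g(su(2)^d) ∧ u(4)` inside `Λ² u(4)` -/
noncomputable def Wg : Submodule ℝ (ExteriorAlgebra ℝ M4) :=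
  Submodule.span ℝ {ω | ∃ x ∈ su2dg, ∃ y : M4, y.conjTranspose = -y ∧ ω = wedge x y}

/-! ### Auxiliary lemmas -/

-- skewness of generators
lemma elm_ct (i j : Fin 4) : (elm i j).conjTranspose = elm j i := by
  ext a b
  simp [elm, Matrix.conjTranspose_apply, Matrix.single, and_comm]

lemma skew_H (i : Fin 3) : (Hgen i).conjTranspose = -(Hgen i) := by
  simp [Hgen, Matrix.conjTranspose_smul, Matrix.conjTranspose_sub, elm_ct,
    Complex.star_def, Complex.conj_I, neg_smul]

lemma skew_E (i : Fin 3) : (Egen i).conjTranspose = -(Egen i) := by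
  have : star ((2 * Complex.I)⁻¹) = -(2 * Complex.I)⁻¹ := by
    simp [Complex.star_def, Complex.conj_I]
  simp [Egen, Matrix.conjTranspose_smul, Matrix.conjTranspose_add, elm_ct, this,
    neg_smul, add_comm]

lemma skew_F (i : Fin 3) : (Fgen i).conjTranspose = -(Fgen i) := by
  simp [Fgen, Matrix.conjTranspose_smul, Matrix.conjTranspose_sub, elm_ct]
  rw [← smul_neg]
  congr 1
  abel

-- wedge algebra
lemma wedge_comm (x y : M4) : wedge x y = - wedge y x := by
  have h := ExteriorAlgebra.ι_sq_zero (R := ℝ) (x + y)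
  rw [map_add, add_mul, mul_add, mul_add, ExteriorAlgebra.ι_sq_zero,
    ExteriorAlgebra.ι_sq_zero, zero_add, add_zero] at h
  exact eq_neg_of_add_eq_zero_left h

lemma wedge_add_left (x y z : M4) : wedge (x + y) z = wedge x z + wedge y z := by
  simp [wedge, map_add, add_mul]
lemma wedge_sub_left (x y z : M4) : wedge (x - y) z = wedge x z - wedge y z := by
  simp [wedge, map_sub, sub_mul]
lemma wedge_add_right (x y z : M4) : wedge x (y + z) = wedge x y + wedge x z := by
  simp [wedge, map_add, mul_add]
lemma wedge_sub_right (x y z : M4) : wedge x (y - z) = wedge x y - wedge x z := by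
  simp [wedge, map_sub, mul_sub]

lemma keyE : wedge (Egen 0) (Hgen 0) - wedge (Egen 2) (Hgen 2)
    = (2⁻¹ : ℝ) • wedge (Egen 0 - Egen 2) (Hgen 0 + Hgen 2)
      - (2⁻¹ : ℝ) • wedge (Hgen 0 - Hgen 2) (Egen 0 + Egen 2) := by
  simp only [wedge_sub_left, wedge_add_right, wedge_sub_right, wedge_add_left]
  rw [wedge_comm (Hgen 0) (Egen 0), wedge_comm (Hgen 0) (Egen 2),
    wedge_comm (Hgen 2) (Egen 0), wedge_comm (Hgen 2) (Egen 2)]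
  module

lemma keyF : wedge (Fgen 0) (Hgen 0) + wedge (Fgen 2) (Hgen 2)
    = (2⁻¹ : ℝ) • wedge (Fgen 0 + Fgen 2) (Hgen 0 + Hgen 2)
      - (2⁻¹ : ℝ) • wedge (Hgen 0 - Hgen 2) (Fgen 0 - Fgen 2) := by
  simp only [wedge_sub_left, wedge_add_right, wedge_sub_right, wedge_add_left]
  rw [wedge_comm (Hgen 0) (Fgen 0), wedge_comm (Hgen 0) (Fgen 2),
    wedge_comm (Hgen 2) (Fgen 0), wedge_comm (Hgen 2) (Fgen 2)]
  module

-- matrix computations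
noncomputable def ginv : M4 := !![1,0,0,0; 0,1,0,0; 0,0,0,-1; 0,0,1,0]

lemma fv2 : ((2 : Fin 4) : ℕ) = 2 := by decide
lemma fv3 : ((3 : Fin 4) : ℕ) = 3 := by decide

lemma ginv_eq : gmat⁻¹ = ginv := by
  apply Matrix.inv_eq_right_inv
  ext i j; fin_cases i <;> fin_cases j <;>
    simp [gmat, ginv, Matrix.mul_apply, Fin.sum_univ_four, Matrix.one_apply,
      Matrix.vecHead, Matrix.vecTail]

open Complex in
lemma Hmats : Hgen 0 = !![I,0,0,0;0,-I,0,0;0,0,0,0;0,0,0,0] ∧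
    Hgen 2 = !![0,0,0,0;0,0,0,0;0,0,I,0;0,0,0,-I] := by
  constructor <;> (ext i j; fin_cases i <;> fin_cases j <;>
    simp [Hgen, elm, Matrix.single, Matrix.of_apply, Matrix.vecHead,
      Matrix.vecTail, Fin.ext_iff, Fin.val_succ, Fin.coe_castSucc, fv2, fv3])

open Complex in
lemma Emats : Egen 0 = !![0,(2*I)⁻¹,0,0;(2*I)⁻¹,0,0,0;0,0,0,0;0,0,0,0] ∧
    Egen 2 = !![0,0,0,0;0,0,0,0;0,0,0,(2*I)⁻¹;0,0,(2*I)⁻¹,0] := by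
  constructor <;> (ext i j; fin_cases i <;> fin_cases j <;>
    simp [Egen, elm, Matrix.single, Matrix.of_apply, Matrix.vecHead,
      Matrix.vecTail, Fin.ext_iff, Fin.val_succ, Fin.coe_castSucc, fv2, fv3])

lemma Fmats : Fgen 0 = !![0,2⁻¹,0,0;-2⁻¹,0,0,0;0,0,0,0;0,0,0,0] ∧
    Fgen 2 = !![0,0,0,0;0,0,0,0;0,0,0,2⁻¹;0,0,-2⁻¹,0] := by
  constructor <;> (ext i j; fin_cases i <;> fin_cases j <;>
    simp [Fgen, elm, Matrix.single, Matrix.of_apply, Matrix.vecHead,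
      Matrix.vecTail, Fin.ext_iff, Fin.val_succ, Fin.coe_castSucc, fv2, fv3])

lemma adH : Adg (Hgen 0 + Hgen 2) = Hgen 0 - Hgen 2 := by
  rw [Adg, ginv_eq, Hmats.1, Hmats.2]
  ext i j; fin_cases i <;> fin_cases j <;>
    simp [gmat, ginv, Matrix.mul_apply, Fin.sum_univ_four, Matrix.vecHead, Matrix.vecTail]

lemma adE : Adg (Egen 0 + Egen 2) = Egen 0 - Egen 2 := by
  rw [Adg, ginv_eq, Emats.1, Emats.2]
  ext i j; fin_cases i <;> fin_cases j <;>
    simp [gmat, ginv, Matrix.mul_apply, Fin.sum_univ_four, Matrix.vecHead, Matrix.vecTail]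

lemma adF : Adg (Fgen 0 + Fgen 2) = Fgen 0 + Fgen 2 := by
  rw [Adg, ginv_eq, Fmats.1, Fmats.2]
  ext i j; fin_cases i <;> fin_cases j <;>
    simp [gmat, ginv, Matrix.mul_apply, Fin.sum_univ_four, Matrix.vecHead, Matrix.vecTail]

-- memberships
lemma memH : Hgen 0 - Hgen 2 ∈ su2dg := by
  rw [← adH]; exact Submodule.subset_span (Set.mem_insert _ _)
lemma memE : Egen 0 - Egen 2 ∈ su2dg := by
  rw [← adE]
  exact Submodule.subset_span (Set.mem_insert_of_mem _ (Set.mem_insert _ _))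
lemma memF : Fgen 0 + Fgen 2 ∈ su2dg := by
  rw [← adF]
  exact Submodule.subset_span (Set.mem_insert_of_mem _ (Set.mem_insert_of_mem _ rfl))

lemma skew_HpH : (Hgen 0 + Hgen 2).conjTranspose = -(Hgen 0 + Hgen 2) := by
  rw [Matrix.conjTranspose_add, skew_H, skew_H]; abel
lemma skew_HmH : (Hgen 0 - Hgen 2).conjTranspose = -(Hgen 0 - Hgen 2) := by
  rw [Matrix.conjTranspose_sub, skew_H, skew_H]; abel
lemma skew_EpE : (Egen 0 + Egen 2).conjTranspose = -(Egen 0 + Egen 2) := by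
  rw [Matrix.conjTranspose_add, skew_E, skew_E]; abel
lemma skew_FmF : (Fgen 0 - Fgen 2).conjTranspose = -(Fgen 0 - Fgen 2) := by
  rw [Matrix.conjTranspose_sub, skew_F, skew_F]; abel

lemma wedge_mem_Wg {x y : M4} (hx : x ∈ su2dg) (hy : y.conjTranspose = -y) :
    wedge x y ∈ Wg :=
  Submodule.subset_span ⟨x, hx, y, hy, rfl⟩

/-- For the standard coboundary cobracket `δ` of `u(4)`, the conjugated diagonal
subalgebra `Ad_g(su(2)^d)` satisfies `δ(Ad_g(su(2)^d)) ⊆ Ad_g(su(2)^d) ∧ u(4)`,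
i.e. `g SU(2)^d g⁻¹` is a coisotropic subgroup. -/
theorem conjugated_su2_coisotropic
    (δ : M4 →ₗ[ℝ] ExteriorAlgebra ℝ M4)
    (hH : ∀ i, δ (Hgen i) = 0) (hHc : δ Hc = 0)
    (hE : ∀ i, δ (Egen i) = wedge (Egen i) (Hgen i))
    (hF : ∀ i, δ (Fgen i) = wedge (Fgen i) (Hgen i)) :
    ∀ x ∈ su2dg, δ x ∈ Wg := by
  intro x hx
  have hx' : x ∈ Submodule.span ℝ
      {Adg (Hgen 0 + Hgen 2), Adg (Egen 0 + Egen 2), Adg (Fgen 0 + Fgen 2)} := hx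
  clear hx
  induction hx' using Submodule.span_induction with
  | mem x hxm =>
    simp only [Set.mem_insert_iff, Set.mem_singleton_iff] at hxm
    rcases hxm with h | h | h
    · subst h
      rw [adH, map_sub, hH 0, hH 2, sub_zero]
      exact zero_mem _
    · subst h
      rw [adE, map_sub, hE 0, hE 2, keyE]
      exact sub_mem (Submodule.smul_mem _ _ (wedge_mem_Wg memE skew_HpH))
        (Submodule.smul_mem _ _ (wedge_mem_Wg memH skew_EpE))
    · subst h
      rw [adF, map_add, hF 0, hF 2, keyF]
      exact sub_mem (Submodule.smul_mem _ _ (wedge_mem_Wg memF skew_HpH))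
        (Submodule.smul_mem _ _ (wedge_mem_Wg memH skew_FmF))
  | zero => rw [map_zero]; exact zero_mem _
  | add x y _ _ ihx ihy => rw [map_add]; exact add_mem ihx ihy
  | smul r x _ ih => rw [map_smul]; exact Submodule.smul_mem _ _ ih

end
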